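/- The set {1 − a ∈ \widehat{ℤG}_χ | a ∈ \widehat{ℤG}_χ, ‖a‖ < 1} is a subgroup of the group of units of \widehat{ℤG}_χ: it contains 1, is closed under multiplication, and is closed under taking inverses. -/

import Mathlib

variable {G : Type*}

/-- The Novikov support condition: for every `r : ℝ` the set
`supp(l) ∩ χ⁻¹([r,∞))` is finite.  The Novikov ring `ℤG^` is the set of
functions `l : G → ℤ` satisfying this condition. -/
def NovikovCond [Group G] (χ : G → ℝ) (l : G → ℤ) : Prop :=
  ∀ r : ℝ, {g : G | l g ≠ 0 ∧ r ≤ χ g}.Finite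

/-- Convolution product `(l₁·l₂)(g) = Σ_{h₁h₂=g} l₁(h₁)·l₂(h₂)`. -/
noncomputable def novConv [Group G] (l₁ l₂ : G → ℤ) : G → ℤ :=
  fun g => ∑ᶠ p ∈ {p : G × G | p.1 * p.2 = g}, l₁ p.1 * l₂ p.2

open Classical in
/-- The unit of the Novikov ring: the indicator function of the identity of `G`. -/
noncomputable def novOne [Group G] : G → ℤ :=
  fun g => if g = 1 then 1 else 0

open Classical in
/-- The norm `‖l‖ = exp (sup {χ g | g ∈ supp l})` for `l ≠ 0`, and `‖0‖ = 0`. -/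
noncomputable def novNorm [Group G] (χ : G → ℝ) (l : G → ℤ) : ℝ :=
  if l = 0 then 0 else Real.exp (sSup {x : ℝ | ∃ g : G, l g ≠ 0 ∧ χ g = x})

section Nov
variable [Group G] {χ : G → ℝ}

lemma chi_one (hχ : ∀ a b : G, χ (a * b) = χ a + χ b) : χ 1 = 0 := by
  have := hχ 1 1; simp at this; linarith

lemma NC_bddAbove {a : G → ℤ} (ha : NovikovCond χ a) :
    ∃ A : ℝ, ∀ g, a g ≠ 0 → χ g ≤ A := by
  obtain ⟨A, hA⟩ := ((ha 0).image χ).bddAbove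
  refine ⟨max A 0, fun g hg => ?_⟩
  rcases le_or_gt 0 (χ g) with h | h
  · exact le_max_of_le_left (hA ⟨g, ⟨hg, h⟩, rfl⟩)
  · exact le_max_of_le_right h.le

def cset (a b : G → ℤ) (g : G) : Set (G × G) :=
  {p | p.1 * p.2 = g ∧ a p.1 ≠ 0 ∧ b p.2 ≠ 0}

lemma cset_finite (hχ : ∀ a b : G, χ (a * b) = χ a + χ b) {a b : G → ℤ}
    (ha : NovikovCond χ a) (hb : NovikovCond χ b) (g : G) : (cset a b g).Finite := by
  obtain ⟨B, hB⟩ := NC_bddAbove hb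
  apply Set.Finite.of_finite_image (f := Prod.fst)
  · apply Set.Finite.subset (ha (χ g - B))
    rintro x ⟨p, ⟨hpg, hpa, hpb⟩, rfl⟩
    refine ⟨hpa, ?_⟩
    have h1 : χ p.1 + χ p.2 = χ g := by rw [← hχ, hpg]
    have := hB p.2 hpb
    linarith
  · rintro p ⟨hpg, -, -⟩ q ⟨hqg, -, -⟩ h
    have h2 : p.2 = q.2 := mul_left_cancel (a := p.1) (by rw [hpg, h, hqg])
    exact Prod.ext h h2

lemma novConv_eq_sum {a b : G → ℤ} {g : G} (hfin : (cset a b g).Finite) {T : Finset (G × G)}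
    (hT1 : cset a b g ⊆ T) (hT2 : ∀ p ∈ T, p.1 * p.2 = g) :
    novConv a b g = ∑ p ∈ T, a p.1 * b p.2 := by
  have hsupp : {p : G × G | p.1 * p.2 = g} ∩ Function.support (fun p : G × G => a p.1 * b p.2)
      = cset a b g := by
    ext p
    simp [cset, Function.support, mul_ne_zero_iff, and_assoc]
  have hf : ({p : G × G | p.1 * p.2 = g} ∩
      Function.support (fun p : G × G => a p.1 * b p.2)).Finite := by
    rw [hsupp]; exact hfin
  rw [novConv, finsum_mem_eq_sum _ hf]
  apply Finset.sum_subset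
  · intro p hp
    rw [Set.Finite.mem_toFinset, hsupp] at hp
    exact hT1 hp
  · intro p hp hnp
    rw [Set.Finite.mem_toFinset, hsupp] at hnp
    by_contra hne
    rcases mul_ne_zero_iff.mp hne with ⟨h1, h2⟩
    exact hnp ⟨hT2 p hp, h1, h2⟩


lemma novOne_apply_one : (novOne : G → ℤ) 1 = 1 := by simp [novOne]

lemma novOne_ne_zero_iff {g : G} : (novOne : G → ℤ) g ≠ 0 ↔ g = 1 := by
  classical
  by_cases h : g = 1 <;> simp [novOne, h]

lemma conv_one_left (a : G → ℤ) : novConv novOne a = a := by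
  funext g
  have hsub : cset novOne a g ⊆ ({((1 : G), g)} : Finset (G × G)) := by
    rintro p ⟨hpg, hp1, -⟩
    have h1 : p.1 = 1 := novOne_ne_zero_iff.mp hp1
    have h2 : p.2 = g := by rw [h1, one_mul] at hpg; exact hpg
    simp [Finset.mem_singleton, Prod.ext_iff, h1, h2]
  have hfin : (cset novOne a g).Finite :=
    Set.Finite.subset (Set.finite_singleton ((1 : G), g)) (by exact_mod_cast hsub)
  rw [novConv_eq_sum hfin hsub (by simp)]
  simp [novOne_apply_one]

lemma conv_one_right (a : G → ℤ) : novConv a novOne = a := by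
  funext g
  have hsub : cset a novOne g ⊆ ({(g, (1 : G))} : Finset (G × G)) := by
    rintro p ⟨hpg, -, hp2⟩
    have h2 : p.2 = 1 := novOne_ne_zero_iff.mp hp2
    have h1 : p.1 = g := by rw [h2, mul_one] at hpg; exact hpg
    simp [Finset.mem_singleton, Prod.ext_iff, h1, h2]
  have hfin : (cset a novOne g).Finite :=
    Set.Finite.subset (Set.finite_singleton (g, (1 : G))) (by exact_mod_cast hsub)
  rw [novConv_eq_sum hfin hsub (by simp)]
  simp [novOne_apply_one]

lemma NC_one : NovikovCond χ (novOne : G → ℤ) := by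
  intro r
  apply Set.Finite.subset (Set.finite_singleton (1 : G))
  rintro g ⟨hg, -⟩
  simpa using novOne_ne_zero_iff.mp hg

lemma NC_zero : NovikovCond χ (0 : G → ℤ) := by
  intro r
  convert Set.finite_empty
  ext g; simp

lemma NC_sub {a b : G → ℤ} (ha : NovikovCond χ a) (hb : NovikovCond χ b) :
    NovikovCond χ (a - b) := by
  intro r
  apply Set.Finite.subset ((ha r).union (hb r))
  rintro g ⟨hg, hr⟩
  by_cases h : a g ≠ 0
  · exact Or.inl ⟨h, hr⟩
  · push_neg at h
    refine Or.inr ⟨fun h2 => hg ?_, hr⟩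
    simp [Pi.sub_apply, h, h2]

lemma exists_mem_cset {a b : G → ℤ} {g : G} (h : novConv a b g ≠ 0) :
    ∃ p, p ∈ cset a b g := by
  by_contra hc
  push_neg at hc
  have he : cset a b g = ∅ := Set.eq_empty_iff_forall_notMem.mpr hc
  have : novConv a b g = ∑ p ∈ (∅ : Finset (G × G)), a p.1 * b p.2 :=
    novConv_eq_sum (by rw [he]; exact Set.finite_empty) (by rw [he]; simp) (by simp)
  simp at this
  exact h this

lemma conv_bound {a b : G → ℤ} {A B : ℝ} (hχ : ∀ a b : G, χ (a * b) = χ a + χ b)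
    (hA : ∀ g, a g ≠ 0 → χ g ≤ A) (hB : ∀ g, b g ≠ 0 → χ g ≤ B) :
    ∀ g, novConv a b g ≠ 0 → χ g ≤ A + B := by
  intro g hg
  obtain ⟨p, hpg, hpa, hpb⟩ := exists_mem_cset hg
  have := hA p.1 hpa
  have := hB p.2 hpb
  have : χ p.1 + χ p.2 = χ g := by rw [← hχ, hpg]
  linarith

lemma NC_conv (hχ : ∀ a b : G, χ (a * b) = χ a + χ b) {a b : G → ℤ}
    (ha : NovikovCond χ a) (hb : NovikovCond χ b) : NovikovCond χ (novConv a b) := by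
  intro r
  obtain ⟨A, hA⟩ := NC_bddAbove ha
  obtain ⟨B, hB⟩ := NC_bddAbove hb
  apply Set.Finite.subset (((ha (r - B)).prod (hb (r - A))).image (fun p : G × G => p.1 * p.2))
  rintro g ⟨hg, hr⟩
  obtain ⟨p, hpg, hpa, hpb⟩ := exists_mem_cset hg
  have hsum : χ p.1 + χ p.2 = χ g := by rw [← hχ, hpg]
  have h1 := hA p.1 hpa
  have h2 := hB p.2 hpb
  exact ⟨p, ⟨⟨hpa, by linarith⟩, ⟨hpb, by linarith⟩⟩, hpg⟩

lemma conv_sub_left (hχ : ∀ a b : G, χ (a * b) = χ a + χ b) {a b z : G → ℤ}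
    (ha : NovikovCond χ a) (hb : NovikovCond χ b) (hz : NovikovCond χ z) :
    novConv (a - b) z = novConv a z - novConv b z := by
  funext g
  have hfa := cset_finite hχ ha hz g
  have hfb := cset_finite hχ hb hz g
  have hfab : (cset (a - b) z g).Finite := by
    apply Set.Finite.subset (hfa.union hfb)
    rintro p ⟨hpg, hp1, hp2⟩
    by_cases h : a p.1 ≠ 0
    · exact Or.inl ⟨hpg, h, hp2⟩
    · push_neg at h
      refine Or.inr ⟨hpg, fun h2 => hp1 ?_, hp2⟩
      simp [Pi.sub_apply, h, h2]
  set T : Finset (G × G) := (hfa.union hfb).toFinset with hT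
  have hTmem : ∀ p ∈ T, p.1 * p.2 = g := by
    intro p hp
    rw [hT, Set.Finite.mem_toFinset] at hp
    rcases hp with h | h
    · exact h.1
    · exact h.1
  have h1 : novConv (a - b) z g = ∑ p ∈ T, (a - b) p.1 * z p.2 := by
    apply novConv_eq_sum hfab _ hTmem
    intro p hp
    simp only [hT, Set.Finite.coe_toFinset]
    rcases hp with ⟨hpg, hp1, hp2⟩
    by_cases h : a p.1 ≠ 0
    · exact Or.inl ⟨hpg, h, hp2⟩
    · push_neg at h
      refine Or.inr ⟨hpg, fun h2 => hp1 ?_, hp2⟩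
      simp [Pi.sub_apply, h, h2]
  have h2 : novConv a z g = ∑ p ∈ T, a p.1 * z p.2 := by
    apply novConv_eq_sum hfa _ hTmem
    intro p hp
    simp only [hT, Set.Finite.coe_toFinset]; exact Or.inl hp
  have h3 : novConv b z g = ∑ p ∈ T, b p.1 * z p.2 := by
    apply novConv_eq_sum hfb _ hTmem
    intro p hp
    simp only [hT, Set.Finite.coe_toFinset]; exact Or.inr hp
  rw [Pi.sub_apply, h1, h2, h3, ← Finset.sum_sub_distrib]
  apply Finset.sum_congr rfl
  intro p _
  simp [sub_mul]

lemma conv_sub_right (hχ : ∀ a b : G, χ (a * b) = χ a + χ b) {a b z : G → ℤ}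
    (ha : NovikovCond χ a) (hb : NovikovCond χ b) (hz : NovikovCond χ z) :
    novConv z (a - b) = novConv z a - novConv z b := by
  funext g
  have hfa := cset_finite hχ hz ha g
  have hfb := cset_finite hχ hz hb g
  have hfab : (cset z (a - b) g).Finite := by
    apply Set.Finite.subset (hfa.union hfb)
    rintro p ⟨hpg, hp1, hp2⟩
    by_cases h : a p.2 ≠ 0
    · exact Or.inl ⟨hpg, hp1, h⟩
    · push_neg at h
      refine Or.inr ⟨hpg, hp1, fun h2 => hp2 ?_⟩
      simp [Pi.sub_apply, h, h2]
  set T : Finset (G × G) := (hfa.union hfb).toFinset with hT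
  have hTmem : ∀ p ∈ T, p.1 * p.2 = g := by
    intro p hp
    rw [hT, Set.Finite.mem_toFinset] at hp
    rcases hp with h | h
    · exact h.1
    · exact h.1
  have h1 : novConv z (a - b) g = ∑ p ∈ T, z p.1 * (a - b) p.2 := by
    apply novConv_eq_sum hfab _ hTmem
    intro p hp
    simp only [hT, Set.Finite.coe_toFinset]
    rcases hp with ⟨hpg, hp1, hp2⟩
    by_cases h : a p.2 ≠ 0
    · exact Or.inl ⟨hpg, hp1, h⟩
    · push_neg at h
      refine Or.inr ⟨hpg, hp1, fun h2 => hp2 ?_⟩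
      simp [Pi.sub_apply, h, h2]
  have h2 : novConv z a g = ∑ p ∈ T, z p.1 * a p.2 := by
    apply novConv_eq_sum hfa _ hTmem
    intro p hp
    simp only [hT, Set.Finite.coe_toFinset]; exact Or.inl hp
  have h3 : novConv z b g = ∑ p ∈ T, z p.1 * b p.2 := by
    apply novConv_eq_sum hfb _ hTmem
    intro p hp
    simp only [hT, Set.Finite.coe_toFinset]; exact Or.inr hp
  rw [Pi.sub_apply, h1, h2, h3, ← Finset.sum_sub_distrib]
  apply Finset.sum_congr rfl
  intro p _
  simp [mul_sub]


lemma conv_assoc (hχ : ∀ a b : G, χ (a * b) = χ a + χ b) {a b c : G → ℤ}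
    (ha : NovikovCond χ a) (hb : NovikovCond χ b) (hc : NovikovCond χ c) :
    novConv (novConv a b) c = novConv a (novConv b c) := by
  classical
  funext g
  obtain ⟨A, hA⟩ := NC_bddAbove ha
  obtain ⟨B, hB⟩ := NC_bddAbove hb
  obtain ⟨C, hC⟩ := NC_bddAbove hc
  set Tr : Set (G × G × G) :=
    {t | t.1 * (t.2.1 * t.2.2) = g ∧ a t.1 ≠ 0 ∧ b t.2.1 ≠ 0 ∧ c t.2.2 ≠ 0} with hTrdef
  have hTrfin : Tr.Finite := by
    apply Set.Finite.of_finite_image (f := fun t : G × G × G => (t.1, t.2.1))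
    · apply Set.Finite.subset ((ha (χ g - B - C)).prod (hb (χ g - A - C)))
      rintro x ⟨t, ⟨htg, hta, htb, htc⟩, rfl⟩
      have h1 : χ t.1 + (χ t.2.1 + χ t.2.2) = χ g := by rw [← hχ, ← hχ, htg]
      have h2 := hA t.1 hta
      have h3 := hB t.2.1 htb
      have h4 := hC t.2.2 htc
      exact ⟨⟨hta, by linarith⟩, ⟨htb, by linarith⟩⟩
    · rintro t ⟨htg, -⟩ s ⟨hsg, -⟩ h
      simp only [Prod.mk.injEq] at h
      obtain ⟨h1, h2⟩ := h
      have h3 : t.2.2 = s.2.2 := by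
        have e1 : t.2.2 = t.2.1⁻¹ * (t.1⁻¹ * g) := by rw [← htg]; group
        have e2 : s.2.2 = s.2.1⁻¹ * (s.1⁻¹ * g) := by rw [← hsg]; group
        rw [e1, e2, h1, h2]
      exact Prod.ext h1 (Prod.ext h2 h3)
  have hab := NC_conv hχ ha hb
  have hbc := NC_conv hχ hb hc
  -- LHS
  have hLHS : novConv (novConv a b) c g
      = ∑ t ∈ hTrfin.toFinset, a t.1 * b t.2.1 * c t.2.2 := by
    set SL : Set (G × G) :=
      ((fun t : G × G × G => (t.1 * t.2.1, t.2.2)) '' Tr) ∪ cset (novConv a b) c g with hSLdef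
    have hSLfin : SL.Finite := (hTrfin.image _).union (cset_finite hχ hab hc g)
    have hSLmul : ∀ p ∈ hSLfin.toFinset, p.1 * p.2 = g := by
      intro p hp
      rw [Set.Finite.mem_toFinset] at hp
      rcases hp with ⟨t, ht, rfl⟩ | h
      · simpa [mul_assoc] using ht.1
      · exact h.1
    have hL1 : novConv (novConv a b) c g = ∑ p ∈ hSLfin.toFinset, novConv a b p.1 * c p.2 :=
      novConv_eq_sum (cset_finite hχ hab hc g)
        (by rw [Set.Finite.coe_toFinset]; exact Set.subset_union_right) hSLmul
    have hL2 : ∀ p : G × G, novConv a b p.1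
        = ∑ q ∈ (cset_finite hχ ha hb p.1).toFinset, a q.1 * b q.2 := fun p =>
      novConv_eq_sum (cset_finite hχ ha hb p.1)
        (by rw [Set.Finite.coe_toFinset])
        (fun q hq => ((cset_finite hχ ha hb p.1).mem_toFinset.mp hq).1)
    have hstep : novConv (novConv a b) c g
        = ∑ x ∈ hSLfin.toFinset.sigma (fun p => (cset_finite hχ ha hb p.1).toFinset),
            a x.2.1 * b x.2.2 * c x.1.2 := by
      rw [hL1, Finset.sum_sigma]
      apply Finset.sum_congr rfl
      intro p _
      rw [hL2 p, Finset.sum_mul]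
    rw [hstep]
    rw [← Finset.sum_filter_ne_zero (s := hSLfin.toFinset.sigma
          (fun p => (cset_finite hχ ha hb p.1).toFinset))]
    rw [← Finset.sum_filter_ne_zero (s := hTrfin.toFinset)]
    apply Finset.sum_nbij' (i := fun x : (_ : G × G) × G × G => (x.2.1, x.2.2, x.1.2))
      (j := fun t : G × G × G => ⟨(t.1 * t.2.1, t.2.2), (t.1, t.2.1)⟩)
    · rintro ⟨⟨p1, p2⟩, q1, q2⟩ hx
      rw [Finset.mem_filter, Finset.mem_sigma] at hx
      obtain ⟨⟨hp, hq⟩, hval⟩ := hx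
      rw [Set.Finite.mem_toFinset] at hq
      obtain ⟨hq12, hqa, hqb⟩ := hq
      have hpg : p1 * p2 = g := hSLmul _ hp
      rw [Finset.mem_filter, Set.Finite.mem_toFinset]
      have hcne : c p2 ≠ 0 := fun h0 => hval (by simp [h0])
      refine ⟨⟨?_, hqa, hqb, hcne⟩, hval⟩
      simp only []
      rw [← mul_assoc, hq12, hpg]
    · rintro ⟨t1, t21, t22⟩ ht
      rw [Finset.mem_filter, Set.Finite.mem_toFinset] at ht
      obtain ⟨⟨htg, hta, htb, htc⟩, hval⟩ := ht
      rw [Finset.mem_filter, Finset.mem_sigma, Set.Finite.mem_toFinset, Set.Finite.mem_toFinset]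
      refine ⟨⟨Or.inl ⟨(t1, t21, t22), ⟨htg, hta, htb, htc⟩, rfl⟩, ⟨rfl, hta, htb⟩⟩, hval⟩
    · rintro ⟨⟨p1, p2⟩, q1, q2⟩ hx
      rw [Finset.mem_filter, Finset.mem_sigma] at hx
      obtain ⟨⟨hp, hq⟩, hval⟩ := hx
      rw [Set.Finite.mem_toFinset] at hq
      obtain ⟨hq12, -, -⟩ := hq
      simp only at hq12 ⊢
      rw [hq12]
    · rintro ⟨t1, t21, t22⟩ ht
      rfl
    · rintro ⟨⟨p1, p2⟩, q1, q2⟩ hx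
      rfl
  -- RHS
  have hRHS : novConv a (novConv b c) g
      = ∑ t ∈ hTrfin.toFinset, a t.1 * (b t.2.1 * c t.2.2) := by
    set SR : Set (G × G) :=
      ((fun t : G × G × G => (t.1, t.2.1 * t.2.2)) '' Tr) ∪ cset a (novConv b c) g with hSRdef
    have hSRfin : SR.Finite := (hTrfin.image _).union (cset_finite hχ ha hbc g)
    have hSRmul : ∀ p ∈ hSRfin.toFinset, p.1 * p.2 = g := by
      intro p hp
      rw [Set.Finite.mem_toFinset] at hp
      rcases hp with ⟨t, ht, rfl⟩ | h
      · simpa using ht.1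
      · exact h.1
    have hR1 : novConv a (novConv b c) g = ∑ p ∈ hSRfin.toFinset, a p.1 * novConv b c p.2 :=
      novConv_eq_sum (cset_finite hχ ha hbc g)
        (by rw [Set.Finite.coe_toFinset]; exact Set.subset_union_right) hSRmul
    have hR2 : ∀ p : G × G, novConv b c p.2
        = ∑ q ∈ (cset_finite hχ hb hc p.2).toFinset, b q.1 * c q.2 := fun p =>
      novConv_eq_sum (cset_finite hχ hb hc p.2)
        (by rw [Set.Finite.coe_toFinset])
        (fun q hq => ((cset_finite hχ hb hc p.2).mem_toFinset.mp hq).1)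
    have hstep : novConv a (novConv b c) g
        = ∑ x ∈ hSRfin.toFinset.sigma (fun p => (cset_finite hχ hb hc p.2).toFinset),
            a x.1.1 * (b x.2.1 * c x.2.2) := by
      rw [hR1, Finset.sum_sigma]
      apply Finset.sum_congr rfl
      intro p _
      rw [hR2 p, Finset.mul_sum]
    rw [hstep]
    rw [← Finset.sum_filter_ne_zero (s := hSRfin.toFinset.sigma
          (fun p => (cset_finite hχ hb hc p.2).toFinset))]
    rw [← Finset.sum_filter_ne_zero (s := hTrfin.toFinset)]
    apply Finset.sum_nbij' (i := fun x : (_ : G × G) × G × G => (x.1.1, x.2.1, x.2.2))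
      (j := fun t : G × G × G => ⟨(t.1, t.2.1 * t.2.2), (t.2.1, t.2.2)⟩)
    · rintro ⟨⟨p1, p2⟩, q1, q2⟩ hx
      rw [Finset.mem_filter, Finset.mem_sigma] at hx
      obtain ⟨⟨hp, hq⟩, hval⟩ := hx
      rw [Set.Finite.mem_toFinset] at hq
      obtain ⟨hq12, hqb, hqc⟩ := hq
      have hpg : p1 * p2 = g := hSRmul _ hp
      rw [Finset.mem_filter, Set.Finite.mem_toFinset]
      have hane : a p1 ≠ 0 := fun h0 => hval (by simp [h0])
      refine ⟨⟨?_, hane, hqb, hqc⟩, hval⟩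
      simp only at hq12 ⊢
      rw [hq12, hpg]
    · rintro ⟨t1, t21, t22⟩ ht
      rw [Finset.mem_filter, Set.Finite.mem_toFinset] at ht
      obtain ⟨⟨htg, hta, htb, htc⟩, hval⟩ := ht
      rw [Finset.mem_filter, Finset.mem_sigma, Set.Finite.mem_toFinset, Set.Finite.mem_toFinset]
      refine ⟨⟨Or.inl ⟨(t1, t21, t22), ⟨htg, hta, htb, htc⟩, rfl⟩, ⟨rfl, htb, htc⟩⟩, hval⟩
    · rintro ⟨⟨p1, p2⟩, q1, q2⟩ hx
      rw [Finset.mem_filter, Finset.mem_sigma] at hx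
      obtain ⟨⟨hp, hq⟩, hval⟩ := hx
      rw [Set.Finite.mem_toFinset] at hq
      obtain ⟨hq12, -, -⟩ := hq
      simp only at hq12 ⊢
      rw [hq12]
    · rintro ⟨t1, t21, t22⟩ ht
      rfl
    · rintro ⟨⟨p1, p2⟩, q1, q2⟩ hx
      rfl
  rw [hLHS, hRHS]
  apply Finset.sum_congr rfl
  intro t _
  rw [mul_assoc]


noncomputable def npow (a : G → ℤ) : ℕ → (G → ℤ)
  | 0 => novOne
  | n + 1 => novConv a (npow a n)

lemma NC_npow (hχ : ∀ a b : G, χ (a * b) = χ a + χ b) {a : G → ℤ} (ha : NovikovCond χ a) :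
    ∀ n, NovikovCond χ (npow a n)
  | 0 => NC_one
  | n + 1 => NC_conv hχ ha (NC_npow hχ ha n)

lemma npow_bound (hχ : ∀ a b : G, χ (a * b) = χ a + χ b) {a : G → ℤ} {c : ℝ}
    (hc : ∀ g, a g ≠ 0 → χ g ≤ c) :
    ∀ n g, npow a n g ≠ 0 → χ g ≤ n * c := by
  intro n
  induction n with
  | zero =>
    intro g hg
    have h1 : g = 1 := novOne_ne_zero_iff.mp hg
    rw [h1, chi_one hχ]
    simp
  | succ n ih =>
    intro g hg
    have := conv_bound hχ hc ih g hg
    push_cast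
    linarith

lemma npow_comm (hχ : ∀ a b : G, χ (a * b) = χ a + χ b) {a : G → ℤ} (ha : NovikovCond χ a) :
    ∀ n, novConv a (npow a n) = novConv (npow a n) a := by
  intro n
  induction n with
  | zero => rw [npow, conv_one_left, conv_one_right]
  | succ n ih =>
    show novConv a (novConv a (npow a n)) = novConv (novConv a (npow a n)) a
    rw [ih, ← conv_assoc hχ ha (NC_npow hχ ha n) ha, ih]

noncomputable def ninv (a : G → ℤ) : G → ℤ := fun g => ∑ᶠ n : ℕ, npow a n g

lemma exists_npow_ne {a : G → ℤ} {g : G} (h : ninv a g ≠ 0) : ∃ n, npow a n g ≠ 0 := by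
  by_contra hc
  push_neg at hc
  exact h (finsum_eq_zero_of_forall_eq_zero hc)

lemma npow_n_finite (hχ : ∀ a b : G, χ (a * b) = χ a + χ b) {a : G → ℤ} {c : ℝ}
    (hc : ∀ g, a g ≠ 0 → χ g ≤ c) (hcneg : c < 0) (g : G) :
    {n : ℕ | npow a n g ≠ 0}.Finite := by
  apply Set.Finite.subset (Set.finite_Iic (⌊χ g / c⌋₊))
  intro n hn
  have h1 : χ g ≤ n * c := npow_bound hχ hc n g hn
  have h2 : (n : ℝ) ≤ χ g / c := (le_div_iff_of_neg hcneg).mpr h1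
  exact Nat.le_floor h2

lemma ninv_eq_sum {a : G → ℤ} {g : G} {M : ℕ} (hM : ∀ n, M ≤ n → npow a n g = 0) :
    ninv a g = ∑ n ∈ Finset.range M, npow a n g := by
  apply finsum_eq_sum_of_support_subset
  intro n hn
  rw [Finset.coe_range, Set.mem_Iio]
  by_contra hc
  exact hn (hM n (not_lt.mp hc))

lemma NC_ninv (hχ : ∀ a b : G, χ (a * b) = χ a + χ b) {a : G → ℤ} {c : ℝ}
    (ha : NovikovCond χ a) (hc : ∀ g, a g ≠ 0 → χ g ≤ c) (hcneg : c < 0) :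
    NovikovCond χ (ninv a) := by
  intro r
  apply Set.Finite.subset (Set.Finite.biUnion (Set.finite_Iic (⌊r / c⌋₊))
    (fun n _ => NC_npow hχ ha n r))
  rintro g ⟨hg, hr⟩
  obtain ⟨n, hn⟩ := exists_npow_ne hg
  have h1 : χ g ≤ n * c := npow_bound hχ hc n g hn
  have h2 : (n : ℝ) ≤ r / c := (le_div_iff_of_neg hcneg).mpr (le_trans hr h1)
  exact Set.mem_biUnion (Nat.le_floor h2) ⟨hn, hr⟩

lemma conv_ninv_left (hχ : ∀ a b : G, χ (a * b) = χ a + χ b) {a : G → ℤ} {c : ℝ}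
    (ha : NovikovCond χ a) (hc : ∀ g, a g ≠ 0 → χ g ≤ c) (hcneg : c < 0) :
    novConv a (ninv a) = ninv a - novOne := by
  funext g
  set U : Set (G × G) := {p | p.1 * p.2 = g ∧ a p.1 ≠ 0 ∧ ∃ n, npow a n p.2 ≠ 0} with hUdef
  have hU2 : ∀ p ∈ U, χ p.2 ≤ 0 := by
    rintro p ⟨-, -, n, hn⟩
    have := npow_bound hχ hc n p.2 hn
    have : (n : ℝ) * c ≤ 0 := mul_nonpos_of_nonneg_of_nonpos (Nat.cast_nonneg n) hcneg.le
    linarith [npow_bound hχ hc n p.2 hn]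
  have hUfin : U.Finite := by
    apply Set.Finite.of_finite_image (f := Prod.fst)
    · apply Set.Finite.subset (ha (χ g))
      rintro x ⟨p, hp, rfl⟩
      have h2 := hU2 p hp
      obtain ⟨hpg, hpa, -⟩ := hp
      have h1 : χ p.1 + χ p.2 = χ g := by rw [← hχ, hpg]
      exact ⟨hpa, by linarith⟩
    · rintro p ⟨hpg, -⟩ q ⟨hqg, -⟩ h
      have h2 : p.2 = q.2 := mul_left_cancel (a := p.1) (by rw [hpg, h, hqg])
      exact Prod.ext h h2
  -- a uniform vanishing threshold
  have hS : ({n : ℕ | npow a n g ≠ 0} ∪ ⋃ p ∈ U, {n : ℕ | npow a n p.2 ≠ 0}).Finite :=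
    (npow_n_finite hχ hc hcneg g).union
      (hUfin.biUnion (fun p _ => npow_n_finite hχ hc hcneg p.2))
  obtain ⟨m, hm⟩ := hS.bddAbove
  have hMg : ∀ n, m + 1 ≤ n → npow a n g = 0 := by
    intro n hn
    by_contra h0
    have := hm (Set.mem_union_left _ h0)
    omega
  have hMp : ∀ p ∈ U, ∀ n, m + 1 ≤ n → npow a n p.2 = 0 := by
    intro p hp n hn
    by_contra h0
    have := hm (Set.mem_union_right _ (Set.mem_biUnion hp h0))
    omega
  have hUmul : ∀ p ∈ hUfin.toFinset, p.1 * p.2 = g := by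
    intro p hp
    exact ((Set.Finite.mem_toFinset _).mp hp).1
  have hcsub : cset a (ninv a) g ⊆ U := by
    rintro p ⟨h1, h2, h3⟩
    exact ⟨h1, h2, exists_npow_ne h3⟩
  have hstep1 : novConv a (ninv a) g = ∑ p ∈ hUfin.toFinset, a p.1 * ninv a p.2 :=
    novConv_eq_sum (hUfin.subset hcsub)
      (by rw [Set.Finite.coe_toFinset]; exact hcsub) hUmul
  have hstep2 : novConv a (ninv a) g
      = ∑ n ∈ Finset.range (m + 1), ∑ p ∈ hUfin.toFinset, a p.1 * npow a n p.2 := by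
    rw [hstep1, Finset.sum_comm]
    apply Finset.sum_congr rfl
    intro p hp
    rw [ninv_eq_sum (hMp p ((Set.Finite.mem_toFinset _).mp hp)), Finset.mul_sum]
  have hstep3 : ∀ n, novConv a (npow a n) g = ∑ p ∈ hUfin.toFinset, a p.1 * npow a n p.2 := by
    intro n
    apply novConv_eq_sum (hUfin.subset ?_) ?_ hUmul
    · rintro p ⟨h1, h2, h3⟩
      exact ⟨h1, h2, n, h3⟩
    · rw [Set.Finite.coe_toFinset]
      rintro p ⟨h1, h2, h3⟩
      exact ⟨h1, h2, n, h3⟩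
  have hstep4 : novConv a (ninv a) g = ∑ n ∈ Finset.range (m + 1), npow a (n + 1) g := by
    rw [hstep2]
    apply Finset.sum_congr rfl
    intro n _
    rw [← hstep3 n]
    rfl
  have hstep5 : ninv a g = ∑ n ∈ Finset.range (m + 1 + 1), npow a n g :=
    ninv_eq_sum (fun n hn => hMg n (by omega))
  rw [hstep4, Pi.sub_apply, hstep5,
    Finset.sum_range_succ' (fun n => npow a n g) (m + 1)]
  have h0 : novOne g = npow a 0 g := rfl
  rw [h0]
  ring

lemma conv_ninv_right (hχ : ∀ a b : G, χ (a * b) = χ a + χ b) {a : G → ℤ} {c : ℝ}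
    (ha : NovikovCond χ a) (hc : ∀ g, a g ≠ 0 → χ g ≤ c) (hcneg : c < 0) :
    novConv (ninv a) a = ninv a - novOne := by
  funext g
  set U : Set (G × G) := {p | p.1 * p.2 = g ∧ (∃ n, npow a n p.1 ≠ 0) ∧ a p.2 ≠ 0} with hUdef
  have hU1 : ∀ p ∈ U, χ p.1 ≤ 0 := by
    rintro p ⟨-, ⟨n, hn⟩, -⟩
    have : (n : ℝ) * c ≤ 0 := mul_nonpos_of_nonneg_of_nonpos (Nat.cast_nonneg n) hcneg.le
    linarith [npow_bound hχ hc n p.1 hn]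
  have hUfin : U.Finite := by
    apply Set.Finite.of_finite_image (f := Prod.snd)
    · apply Set.Finite.subset (ha (χ g))
      rintro x ⟨p, hp, rfl⟩
      have h2 := hU1 p hp
      obtain ⟨hpg, -, hpa⟩ := hp
      have h1 : χ p.1 + χ p.2 = χ g := by rw [← hχ, hpg]
      exact ⟨hpa, by linarith⟩
    · rintro p ⟨hpg, -⟩ q ⟨hqg, -⟩ h
      have h1 : p.1 = q.1 := mul_right_cancel (b := p.2) (by rw [hpg, h, hqg])
      exact Prod.ext h1 h
  have hS : ({n : ℕ | npow a n g ≠ 0} ∪ ⋃ p ∈ U, {n : ℕ | npow a n p.1 ≠ 0}).Finite :=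
    (npow_n_finite hχ hc hcneg g).union
      (hUfin.biUnion (fun p _ => npow_n_finite hχ hc hcneg p.1))
  obtain ⟨m, hm⟩ := hS.bddAbove
  have hMg : ∀ n, m + 1 ≤ n → npow a n g = 0 := by
    intro n hn
    by_contra h0
    have := hm (Set.mem_union_left _ h0)
    omega
  have hMp : ∀ p ∈ U, ∀ n, m + 1 ≤ n → npow a n p.1 = 0 := by
    intro p hp n hn
    by_contra h0
    have := hm (Set.mem_union_right _ (Set.mem_biUnion hp h0))
    omega
  have hUmul : ∀ p ∈ hUfin.toFinset, p.1 * p.2 = g := by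
    intro p hp
    exact ((Set.Finite.mem_toFinset _).mp hp).1
  have hcsub : cset (ninv a) a g ⊆ U := by
    rintro p ⟨h1, h2, h3⟩
    exact ⟨h1, exists_npow_ne h2, h3⟩
  have hstep1 : novConv (ninv a) a g = ∑ p ∈ hUfin.toFinset, ninv a p.1 * a p.2 :=
    novConv_eq_sum (hUfin.subset hcsub)
      (by rw [Set.Finite.coe_toFinset]; exact hcsub) hUmul
  have hstep2 : novConv (ninv a) a g
      = ∑ n ∈ Finset.range (m + 1), ∑ p ∈ hUfin.toFinset, npow a n p.1 * a p.2 := by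
    rw [hstep1, Finset.sum_comm]
    apply Finset.sum_congr rfl
    intro p hp
    rw [ninv_eq_sum (hMp p ((Set.Finite.mem_toFinset _).mp hp)), Finset.sum_mul]
  have hstep3 : ∀ n, novConv (npow a n) a g = ∑ p ∈ hUfin.toFinset, npow a n p.1 * a p.2 := by
    intro n
    apply novConv_eq_sum (hUfin.subset ?_) ?_ hUmul
    · rintro p ⟨h1, h2, h3⟩
      exact ⟨h1, ⟨n, h2⟩, h3⟩
    · rw [Set.Finite.coe_toFinset]
      rintro p ⟨h1, h2, h3⟩
      exact ⟨h1, ⟨n, h2⟩, h3⟩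
  have hstep4 : novConv (ninv a) a g = ∑ n ∈ Finset.range (m + 1), npow a (n + 1) g := by
    rw [hstep2]
    apply Finset.sum_congr rfl
    intro n _
    rw [← hstep3 n, ← npow_comm hχ ha n]
    rfl
  have hstep5 : ninv a g = ∑ n ∈ Finset.range (m + 1 + 1), npow a n g :=
    ninv_eq_sum (fun n hn => hMg n (by omega))
  rw [hstep4, Pi.sub_apply, hstep5,
    Finset.sum_range_succ' (fun n => npow a n g) (m + 1)]
  have h0 : novOne g = npow a 0 g := rfl
  rw [h0]
  ring

lemma small_of_norm {a : G → ℤ} (ha : NovikovCond χ a) (hnorm : novNorm χ a < 1) :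
    ∃ c : ℝ, c < 0 ∧ ∀ g, a g ≠ 0 → χ g ≤ c := by
  by_cases h : a = 0
  · exact ⟨-1, by norm_num, fun g hg => absurd (by rw [h]; rfl) hg⟩
  · rw [novNorm, if_neg h] at hnorm
    rw [Real.exp_lt_one_iff] at hnorm
    refine ⟨_, hnorm, fun g hg => ?_⟩
    apply le_csSup
    · obtain ⟨A, hA⟩ := NC_bddAbove ha
      exact ⟨A, by rintro x ⟨g', hg', rfl⟩; exact hA g' hg'⟩
    · exact ⟨g, hg, rfl⟩

lemma norm_of_small {a : G → ℤ} {c : ℝ} (hcneg : c < 0) (hc : ∀ g, a g ≠ 0 → χ g ≤ c) :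
    novNorm χ a < 1 := by
  by_cases h : a = 0
  · rw [novNorm, if_pos h]; norm_num
  · rw [novNorm, if_neg h, Real.exp_lt_one_iff]
    have hne : ∃ g, a g ≠ 0 := by
      by_contra hc2
      push_neg at hc2
      exact h (funext hc2)
    obtain ⟨g0, hg0⟩ := hne
    calc sSup {x : ℝ | ∃ g : G, a g ≠ 0 ∧ χ g = x}
        ≤ c := csSup_le ⟨χ g0, g0, hg0, rfl⟩ (by rintro x ⟨g', hg', rfl⟩; exact hc g' hg')
      _ < 0 := hcneg

lemma inv_supp_nonpos (hχ : ∀ a b : G, χ (a * b) = χ a + χ b) {a v : G → ℤ} {c : ℝ}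
    (hv : NovikovCond χ v) (hcneg : c < 0) (hc : ∀ g, a g ≠ 0 → χ g ≤ c)
    (hrel : ∀ g, v g = novOne g + novConv a v g) :
    ∀ g, v g ≠ 0 → χ g ≤ 0 := by
  by_contra hcon
  push_neg at hcon
  obtain ⟨g, hg, hgpos⟩ := hcon
  set F : Set G := {h | v h ≠ 0 ∧ χ g ≤ χ h} with hFdef
  have hFfin : F.Finite := hv (χ g)
  have hFne : F.Nonempty := ⟨g, hg, le_refl _⟩
  obtain ⟨g0, hg0F, hg0max⟩ := Set.Finite.exists_maximalFor χ F hFfin hFne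
  have hone : novOne g0 = 0 := by
    have hne1 : g0 ≠ 1 := by
      intro h1
      have h2 : χ g ≤ χ g0 := hg0F.2
      rw [h1, chi_one hχ] at h2
      linarith
    simp [novOne, hne1]
  have hconv : novConv a v g0 = 0 := by
    by_contra h0
    obtain ⟨p, hpg, hpa, hpv⟩ := exists_mem_cset h0
    have hsum : χ p.1 + χ p.2 = χ g0 := by rw [← hχ, hpg]
    have h1 := hc p.1 hpa
    have hlt : χ g0 < χ p.2 := by linarith
    have hp2F : p.2 ∈ F := ⟨hpv, by linarith [hg0F.2]⟩
    have := hg0max hp2F hlt.le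
    linarith
  have := hrel g0
  rw [hone, hconv] at this
  exact hg0F.1 (by simpa using this)
end Nov

/-- The set `{1 − a | a ∈ ℤG^_χ, ‖a‖ < 1}`. -/
def novSmallUnits [Group G] (χ : G → ℝ) : Set (G → ℤ) :=
  {u | ∃ a : G → ℤ, NovikovCond χ a ∧ novNorm χ a < 1 ∧ u = novOne - a}

/-- The set `{1 − a | ‖a‖ < 1}` is a subgroup of the group of
units of `ℤG^_χ`: its elements are units of the Novikov ring, it contains `1`,
it is closed under multiplication, and it is closed under taking inverses. -/
theorem statement6 [Group G] (χ : G → ℝ) (hχ : ∀ a b : G, χ (a * b) = χ a + χ b) :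
    -- elements are units of the Novikov ring
    (∀ u ∈ novSmallUnits χ, NovikovCond χ u ∧
        ∃ v : G → ℤ, NovikovCond χ v ∧ novConv u v = novOne ∧ novConv v u = novOne) ∧
    -- contains 1
    novOne ∈ novSmallUnits χ ∧
    -- closed under multiplication
    (∀ u ∈ novSmallUnits χ, ∀ v ∈ novSmallUnits χ, novConv u v ∈ novSmallUnits χ) ∧
    -- closed under taking inverses
    (∀ u ∈ novSmallUnits χ, ∀ v : G → ℤ, NovikovCond χ v →
        novConv u v = novOne → novConv v u = novOne → v ∈ novSmallUnits χ) := by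
  refine ⟨?_, ?_, ?_, ?_⟩
  · rintro u ⟨a, hNCa, hnorm, rfl⟩
    obtain ⟨c, hcneg, hc⟩ := small_of_norm hNCa hnorm
    have hNCinv := NC_ninv hχ hNCa hc hcneg
    refine ⟨NC_sub NC_one hNCa, ninv a, hNCinv, ?_, ?_⟩
    · rw [conv_sub_left hχ NC_one hNCa hNCinv, conv_one_left,
        conv_ninv_left hχ hNCa hc hcneg, sub_sub_cancel]
    · rw [conv_sub_right hχ NC_one hNCa hNCinv, conv_one_right,
        conv_ninv_right hχ hNCa hc hcneg, sub_sub_cancel]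
  · exact ⟨0, NC_zero,
      norm_of_small (by norm_num : (-1 : ℝ) < 0) (fun g hg => absurd rfl hg),
      (sub_zero _).symm⟩
  · rintro u ⟨a, hNCa, hna, rfl⟩ v ⟨b, hNCb, hnb, rfl⟩
    obtain ⟨ca, hcaneg, hca⟩ := small_of_norm hNCa hna
    obtain ⟨cb, hcbneg, hcb⟩ := small_of_norm hNCb hnb
    have hNCab := NC_conv hχ hNCa hNCb
    refine ⟨a - (novConv a b - b), NC_sub hNCa (NC_sub hNCab hNCb), ?_, ?_⟩
    · apply norm_of_small (max_lt hcaneg hcbneg)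
      intro g hg
      by_cases ha0 : a g ≠ 0
      · exact le_trans (hca g ha0) (le_max_left _ _)
      · push_neg at ha0
        have hg2 : (novConv a b - b) g ≠ 0 := by
          intro h0
          apply hg
          simp [Pi.sub_apply, ha0, h0]
        by_cases hb0 : b g ≠ 0
        · exact le_trans (hcb g hb0) (le_max_right _ _)
        · push_neg at hb0
          have hab : novConv a b g ≠ 0 := by
            intro h0
            apply hg2
            simp [Pi.sub_apply, h0, hb0]
          have h3 := conv_bound hχ hca hcb g hab
          have h4 := le_max_left ca cb
          linarith
    · rw [conv_sub_right hχ NC_one hNCb (NC_sub NC_one hNCa), conv_one_right,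
        conv_sub_left hχ NC_one hNCa hNCb, conv_one_left]
      funext g
      simp only [Pi.sub_apply]
      ring
  · rintro u ⟨a, hNCa, hna, rfl⟩ v hNCv huv hvu
    obtain ⟨c, hcneg, hc⟩ := small_of_norm hNCa hna
    have hrel : ∀ g, v g = novOne g + novConv a v g := by
      intro g
      have h1 : novConv (novOne - a) v = novOne := huv
      rw [conv_sub_left hχ NC_one hNCa hNCv, conv_one_left] at h1
      have h2 := congrFun h1 g
      simp only [Pi.sub_apply] at h2
      omega
    have hv0 := inv_supp_nonpos hχ hNCv hcneg hc hrel
    refine ⟨novOne - v, NC_sub NC_one hNCv, ?_, (sub_sub_cancel novOne v).symm⟩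
    apply norm_of_small hcneg
    intro g hg
    have hconv : novConv a v g ≠ 0 := by
      intro h0
      apply hg
      have h2 := hrel g
      simp [Pi.sub_apply, h2, h0]
    obtain ⟨p, hpg, hpa, hpv⟩ := exists_mem_cset hconv
    have hsum : χ p.1 + χ p.2 = χ g := by rw [← hχ, hpg]
    have h1 := hc p.1 hpa
    have h2 := hv0 p.2 hpv
    linarith
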